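/- Let P, R be integers with 1 < R < P and 2 < P, and let (x_n) satisfy x_n = (P-R)x_{n-1} + (PR-2)x_{n-2} + (P-R)x_{n-3} - x_{n-4} for n ≥ 4. If the initial terms x_0 < x_1 < x_2 < x_3 are non-negative and strictly increasing, then the sequence (x_n) is strictly increasing. -/
import Mathlib


theorem rec_seq_strict_mono (P R : ℤ) (hR : 1 < R) (hRP : R < P) (hP : 2 < P)
    (x : ℕ → ℝ)
    (hrec : ∀ n, 4 ≤ n →
      x n = (P - R) * x (n-1) + (P*R - 2) * x (n-2) + (P - R) * x (n-3) - x (n-4))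
    (h0 : 0 ≤ x 0) (h01 : x 0 < x 1) (h12 : x 1 < x 2) (h23 : x 2 < x 3) :
    StrictMono x := by
  have h1 : (R:ℝ) + 1 ≤ P := by exact_mod_cast Int.add_one_le_of_lt hRP
  have h2 : (2:ℝ) ≤ R := by exact_mod_cast Int.add_one_le_of_lt hR
  have h3 : (3:ℝ) ≤ P := by linarith
  have h4 : (4:ℝ) ≤ (P:ℝ)*R - 2 := by nlinarith
  have key : ∀ n, 0 ≤ x n ∧ x n < x (n+1) := by
    intro n
    induction n using Nat.strong_induction_on with
    | _ n ih =>
      match n with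
      | 0 => exact ⟨h0, h01⟩
      | 1 => exact ⟨le_of_lt (lt_of_le_of_lt h0 h01), h12⟩
      | 2 => exact ⟨by linarith, h23⟩
      | (m+3) =>
        obtain ⟨hm0, hm1⟩ := ih m (by omega)
        obtain ⟨hm10, hm11⟩ := ih (m+1) (by omega)
        obtain ⟨hm20, hm21⟩ := ih (m+2) (by omega)
        have hrec4 : x (m+4) = ((P:ℝ) - R) * x (m+3) + ((P:ℝ)*R - 2) * x (m+2)
            + ((P:ℝ) - R) * x (m+1) - x m := hrec (m+4) (by omega)
        have hpos1 : 0 < x (m+1) := lt_of_le_of_lt hm0 hm1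
        have h30 : 0 ≤ x (m+3) := le_trans hm20 (le_of_lt hm21)
        refine ⟨h30, ?_⟩
        nlinarith [mul_nonneg (by linarith : (0:ℝ) ≤ (P:ℝ) - R - 1) h30,
          mul_nonneg (by linarith : (0:ℝ) ≤ (P:ℝ) - R - 1) hpos1.le,
          mul_nonneg (by linarith : (0:ℝ) ≤ (P:ℝ)*R - 2 - 4) hm20,
          le_trans hm1.le hm11.le]
  exact strictMono_nat_of_lt_succ (fun n => (key n).2)
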